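/- Let F = {f₁,…,fₘ} be an IFS on a compact metric space X where each fᵢ is strictly distance-decreasing: d(fᵢ(x),fᵢ(y)) < d(x,y) for all x ≠ y. Then the Hutchinson map H(A) = ⋃ᵢ fᵢ(A) is strictly distance-decreasing on the space K(X) of non-empty compact subsets with the Hausdorff metric: d_H(H(A),H(B)) < d_H(A,B) for all A ≠ B. -/

import Mathlib

open Metric

theorem stmt_14 {X : Type*} [MetricSpace X] [CompactSpace X] {m : ℕ} (hm : 0 < m)
    (f : Fin m → X → X)
    (hdec : ∀ (i : Fin m) (x y : X), x ≠ y → dist (f i x) (f i y) < dist x y) :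
    ∀ A B : Set X, A.Nonempty → IsCompact A → B.Nonempty → IsCompact B → A ≠ B →
      hausdorffDist (⋃ i : Fin m, f i '' A) (⋃ i : Fin m, f i '' B) <
        hausdorffDist A B := by
  intro A B hAne hAc hBne hBc hne
  have hcont : ∀ i, Continuous (f i) := by
    intro i
    refine (LipschitzWith.of_dist_le_mul (K := 1) ?_).continuous
    intro x y
    rcases eq_or_ne x y with h | h
    · simp [h]
    · simpa using (hdec i x y h).le
  set HA := ⋃ i : Fin m, f i '' A with hHA
  set HB := ⋃ i : Fin m, f i '' B with hHB
  have hHAc : IsCompact HA := isCompact_iUnion fun i => hAc.image (hcont i)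
  have hHBc : IsCompact HB := isCompact_iUnion fun i => hBc.image (hcont i)
  have i0 : Fin m := ⟨0, hm⟩
  obtain ⟨a0, ha0⟩ := hAne
  obtain ⟨b0, hb0⟩ := hBne
  have hAne : A.Nonempty := ⟨a0, ha0⟩
  have hBne : B.Nonempty := ⟨b0, hb0⟩
  have hHAne : HA.Nonempty := ⟨f i0 a0, Set.mem_iUnion.2 ⟨i0, ⟨a0, ha0, rfl⟩⟩⟩
  have hHBne : HB.Nonempty := ⟨f i0 b0, Set.mem_iUnion.2 ⟨i0, ⟨b0, hb0, rfl⟩⟩⟩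
  have hedist : EMetric.hausdorffEdist A B ≠ ⊤ :=
    hausdorffEdist_ne_top_of_nonempty_of_bounded hAne hBne hAc.isBounded hBc.isBounded
  set r := hausdorffDist A B with hrdef
  have hr : 0 < r := by
    rcases (Metric.hausdorffDist_nonneg (s := A) (t := B)).lt_or_eq with h | h
    · exact h
    · exfalso
      apply hne
      have := (Metric.hausdorffDist_zero_iff_closure_eq_closure hedist).1 h.symm
      rwa [hAc.isClosed.closure_eq, hBc.isClosed.closure_eq] at this
  -- key step: every point of H(S) is within < r of H(T), given each point of S within ≤ r of T
  have key : ∀ (S T : Set X), T.Nonempty → IsCompact T →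
      (∀ a ∈ S, infDist a T ≤ r) →
      ∀ x ∈ ⋃ i : Fin m, f i '' S, infDist x (⋃ i : Fin m, f i '' T) < r := by
    intro S T hTne hTc hST x hx
    obtain ⟨i, a, haS, rfl⟩ : ∃ i a, a ∈ S ∧ f i a = x := by
      simpa [Set.mem_iUnion] using hx
    obtain ⟨b, hbT, hb⟩ := hTc.exists_infDist_eq_dist hTne a
    have hab : dist a b ≤ r := by rw [← hb]; exact hST a haS
    have hmem : f i b ∈ ⋃ i : Fin m, f i '' T :=
      Set.mem_iUnion.2 ⟨i, ⟨b, hbT, rfl⟩⟩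
    have h1 : infDist (f i a) (⋃ i : Fin m, f i '' T) ≤ dist (f i a) (f i b) :=
      infDist_le_dist_of_mem hmem
    rcases eq_or_ne a b with h | h
    · calc infDist (f i a) (⋃ i : Fin m, f i '' T) ≤ dist (f i a) (f i b) := h1
        _ = 0 := by simp [h]
        _ < r := hr
    · calc infDist (f i a) (⋃ i : Fin m, f i '' T) ≤ dist (f i a) (f i b) := h1
        _ < dist a b := hdec i a b h
        _ ≤ r := hab
  have keyA : ∀ x ∈ HA, infDist x HB < r := by
    refine key A B hBne hBc ?_
    intro a ha
    exact infDist_le_hausdorffDist_of_mem ha hedist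
  have keyB : ∀ x ∈ HB, infDist x HA < r := by
    refine key B A hAne hAc ?_
    intro b hb
    have hedist' : EMetric.hausdorffEdist B A ≠ ⊤ := by
      exact (EMetric.hausdorffEdist_comm (s := B) (t := A)).trans_ne hedist
    have := infDist_le_hausdorffDist_of_mem hb hedist'
    rwa [hausdorffDist_comm] at this
  obtain ⟨x₀, hx₀, hx₀max⟩ :=
    hHAc.exists_isMaxOn hHAne (continuous_infDist_pt HB).continuousOn
  obtain ⟨y₀, hy₀, hy₀max⟩ :=
    hHBc.exists_isMaxOn hHBne (continuous_infDist_pt HA).continuousOn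
  have hA' : ∀ x ∈ HA, infDist x HB ≤ max (infDist x₀ HB) (infDist y₀ HA) :=
    fun x hx => le_max_of_le_left (hx₀max hx)
  have hB' : ∀ x ∈ HB, infDist x HA ≤ max (infDist x₀ HB) (infDist y₀ HA) :=
    fun x hx => le_max_of_le_right (hy₀max hx)
  have hle : hausdorffDist HA HB ≤ max (infDist x₀ HB) (infDist y₀ HA) :=
    hausdorffDist_le_of_infDist
      (le_max_of_le_left infDist_nonneg) hA' hB'
  exact hle.trans_lt (max_lt (keyA x₀ hx₀) (keyB y₀ hy₀))
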